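/- Let F ⊣ U : C → V be an adjunction where V has finite products and C is enriched in V with copowers, and suppose F is equipped with a natural coherent isomorphism F(A × B) ≅ A ⊗ F(B). Then F is naturally isomorphic to the functor A ↦ A ⊗ F(1), and consequently the monad U F is naturally isomorphic to the linear-use state monad A ↦ C(F(1), A ⊗ F(1)). -/

import Mathlib

open CategoryTheory CategoryTheory.Limits

section Aux

variable {C D : Type*} [Category C] [Category D]

lemma ofNatIsoLeft_unit_app {L G : C ⥤ D} {R : D ⥤ C} (adj : L ⊣ R) (iso : L ≅ G) (X : C) :
    (adj.ofNatIsoLeft iso).unit.app X = adj.unit.app X ≫ R.map (iso.hom.app X) := by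
  simp [Adjunction.ofNatIsoLeft, Adjunction.mkOfHomEquiv, Adjunction.homEquiv_unit]

lemma ofNatIsoLeft_counit_app {L G : C ⥤ D} {R : D ⥤ C} (adj : L ⊣ R) (iso : L ≅ G) (Y : D) :
    (adj.ofNatIsoLeft iso).counit.app Y = iso.inv.app (R.obj Y) ≫ adj.counit.app Y := by
  simp [Adjunction.ofNatIsoLeft, Adjunction.mkOfHomEquiv, Adjunction.homEquiv_counit]

/-- Two adjunctions with isomorphic left adjoints induce isomorphic monads. -/
lemma monadIsoOfLeftIso {L L' : C ⥤ D} {R R' : D ⥤ C}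
    (adj1 : L ⊣ R) (adj2 : L' ⊣ R') (e : L ≅ L') : Nonempty (adj1.toMonad ≅ adj2.toMonad) := by
  obtain ⟨ru, hη, hc⟩ : ∃ ru : R ≅ R',
      (∀ x, adj1.unit.app x ≫ R.map (e.hom.app x) ≫ ru.hom.app (L'.obj x) = adj2.unit.app x) ∧
      (∀ Y, L'.map (ru.hom.app Y) ≫ adj2.counit.app Y =
        e.inv.app (R.obj Y) ≫ adj1.counit.app Y) := by
    refine ⟨Adjunction.rightAdjointUniq (adj1.ofNatIsoLeft e) adj2, ?_, ?_⟩
    · intro x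
      have h := Adjunction.unit_rightAdjointUniq_hom_app (adj1.ofNatIsoLeft e) adj2 x
      rw [ofNatIsoLeft_unit_app] at h
      simpa using h
    · intro Y
      have h := Adjunction.rightAdjointUniq_hom_app_counit (adj1.ofNatIsoLeft e) adj2 Y
      rwa [ofNatIsoLeft_counit_app] at h
  refine ⟨MonadIso.mk (Functor.isoWhiskerRight e R ≪≫ Functor.isoWhiskerLeft L' ru) ?_ ?_⟩
  · intro X
    change adj1.unit.app X ≫ R.map (e.hom.app X) ≫ ru.hom.app (L'.obj X) = adj2.unit.app X
    exact hη X
  · intro X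
    have key : adj1.counit.app (L.obj X) ≫ e.hom.app X =
        L.map (R.map (e.hom.app X) ≫ ru.hom.app (L'.obj X)) ≫
          e.hom.app (R'.obj (L'.obj X)) ≫ adj2.counit.app (L'.obj X) := by
      have h1 := e.hom.naturality (R.map (e.hom.app X) ≫ ru.hom.app (L'.obj X))
      try dsimp at h1
      rw [← Category.assoc, h1, Category.assoc, Functor.map_comp, Category.assoc, hc]
      have h2 := e.inv.naturality (R.map (e.hom.app X))
      try dsimp at h2
      slice_rhs 2 3 => rw [h2]
      slice_rhs 1 2 => rw [e.hom_inv_id_app]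
      rw [Category.id_comp]
      have h3 := adj1.counit.naturality (e.hom.app X)
      try dsimp at h3
      rw [h3]
    have hn := ru.hom.naturality (adj2.counit.app (L'.obj X))
    try dsimp at hn
    change R.map (adj1.counit.app (L.obj X)) ≫ R.map (e.hom.app X) ≫ ru.hom.app (L'.obj X) = (R.map (L.map (R.map (e.hom.app X) ≫ ru.hom.app (L'.obj X))) ≫ (R.map (e.hom.app (R'.obj (L'.obj X))) ≫ ru.hom.app (L'.obj (R'.obj (L'.obj X))))) ≫ R'.map (adj2.counit.app (L'.obj X))
    dsimp
    simp only [Category.assoc]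
    rw [← R.map_comp_assoc, key]
    simp only [Functor.map_comp, Category.assoc]
    rw [hn]

end Aux

/-- Let `(V, C)` be an enriched model: `V` has finite products and acts on `C`
via `act : V ⥤ C ⥤ C`, with right adjoints `H X` to `(- ⊗ X)` (copowers and
enrichment).  Suppose `F ⊣ U : C → V` is an adjunction together with a natural
isomorphism `F(A ⨯ B) ≅ A ⊗ F(B)`.  Then `F` is naturally isomorphic to the
functor `A ↦ A ⊗ F(1)`, and consequently the monad `U F` is isomorphic (as a
monad) to the linear-use state monad `A ↦ C(F(1), A ⊗ F(1))` induced by the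
state object `F(1)`. -/
theorem stmt15 {V C : Type*} [Category V] [Category C] [HasFiniteProducts V]
    (act : V ⥤ C ⥤ C)
    (H : C → (C ⥤ V))
    (adj : ∀ X : C, act.flip.obj X ⊣ H X)
    (F : V ⥤ C) (U : C ⥤ V) (FU : F ⊣ U)
    (str : (prod.functor ⋙ (Functor.whiskeringRight V V C).obj F) ≅
      (act ⋙ (Functor.whiskeringLeft V C C).obj F)) :
    Nonempty (F ≅ act.flip.obj (F.obj (⊤_ V))) ∧
    Nonempty ((FU.toMonad : Monad V) ≅ (adj (F.obj (⊤_ V))).toMonad) := by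
  have e : F ≅ act.flip.obj (F.obj (⊤_ V)) := by
    refine NatIso.ofComponents
      (fun A => F.mapIso (prod.rightUnitor A).symm ≪≫ (str.app A).app (⊤_ V)) ?_
    intro A A' f
    have hstr := congr_app (str.hom.naturality f) (⊤_ V)
    change F.map f ≫ (F.map (prod.rightUnitor A').inv ≫ (str.hom.app A').app (⊤_ V)) = (F.map (prod.rightUnitor A).inv ≫ (str.hom.app A).app (⊤_ V)) ≫ (act.map f).app (F.obj (⊤_ V))
    dsimp at hstr ⊢
    erw [Category.assoc, ← hstr, ← F.map_comp_assoc, ← F.map_comp_assoc]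
    congr 2
    change f ≫ (prod.rightUnitor A').inv = (prod.rightUnitor A).inv ≫ prod.map f (𝟙 _)
    apply Limits.prod.hom_ext <;> simp
  exact ⟨⟨e⟩, monadIsoOfLeftIso FU (adj _) e⟩
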